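/- Let G be an additive abelian group such that every element is divisible by 2 (for every g ∈ G there exists g' ∈ G with g = g' + g'). If β₁ and β₂ are antisymmetric bicharacters on G with values in Circle such that the bicharacter β(x,y) := β₁(x,y)·β₂(x,y)⁻¹ is symmetric, then β₁ = β₂. In particular, each cohomology class of bicharacters on such a group contains at most one antisymmetric bicharacter. -/
import Mathlib


/-- On a 2-divisible additive abelian group, each cohomology class of bicharacters
contains at most one antisymmetric bicharacter: two antisymmetric bicharacters whose
quotient is symmetric are equal. -/
theorem antisymmetric_bicharacter_unique {G : Type*} [AddCommGroup G]
    (hdiv : ∀ g : G, ∃ g' : G, g = g' + g')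
    (β₁ β₂ : G → G → Circle)
    (h₁add_left : ∀ x x' y : G, β₁ (x + x') y = β₁ x y * β₁ x' y)
    (h₁add_right : ∀ x y y' : G, β₁ x (y + y') = β₁ x y * β₁ x y')
    (h₂add_left : ∀ x x' y : G, β₂ (x + x') y = β₂ x y * β₂ x' y)
    (h₂add_right : ∀ x y y' : G, β₂ x (y + y') = β₂ x y * β₂ x y')
    (h₁anti : ∀ x y : G, β₁ x y = (β₁ y x)⁻¹)
    (h₂anti : ∀ x y : G, β₂ x y = (β₂ y x)⁻¹)
    (hsym : ∀ x y : G, β₁ x y * (β₂ x y)⁻¹ = β₁ y x * (β₂ y x)⁻¹) :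
    ∀ x y : G, β₁ x y = β₂ x y := by
  have hsq : ∀ x y : G, β₁ x y * β₁ x y = β₂ x y * β₂ x y := by
    intro x y
    have h := hsym x y
    rw [h₁anti y x, h₂anti y x, inv_inv] at h
    have h2 := congrArg (fun z => β₁ x y * β₂ x y * z) h
    simpa [mul_assoc, mul_comm, mul_left_comm] using h2
  intro x y
  obtain ⟨x', rfl⟩ := hdiv x
  rw [h₁add_left, h₂add_left]
  exact hsq x' y
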